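/- Let H be a complex Hilbert space and let z be a bounded linear operator on H with ‖z‖ ≤ 1. Then there exists a linear isometry Ψ from B(H) into B(K), where K = H ⊕ H is the Hilbert space direct sum, such that Ψ(x)·Ψ(y) = Ψ(x z* y) for all x, y ∈ B(H) (in particular Ψ(x)² = Ψ(x z* x) for every x). Consequently, if X is a norm-closed subspace of B(H) with x z* x ∈ X for all x ∈ X, then the restriction of Ψ to X is an isometric Jordan homomorphism from X, equipped with the product (x, y) ↦ ½(x z* y + y z* x), onto the norm-closed subspace Ψ(X) of B(K), and Ψ(X) is closed under squares (that is, Ψ(X) is a Jordan operator algebra). -/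

import Mathlib

set_option maxHeartbeats 1000000
set_option synthInstance.maxHeartbeats 400000

noncomputable section KPauxSection

namespace KPaux

open ContinuousLinearMap

variable {H : Type*} [NormedAddCommGroup H] [InnerProductSpace ℂ H] [CompleteSpace H]

private lemma opNorm_eq_of_ptwise {E F G : Type*} [NormedAddCommGroup E] [NormedSpace ℂ E]
    [NormedAddCommGroup F] [NormedSpace ℂ F] [NormedAddCommGroup G] [NormedSpace ℂ G]
    (f : E →L[ℂ] F) (g : E →L[ℂ] G) (h : ∀ x, ‖f x‖ = ‖g x‖) : ‖f‖ = ‖g‖ :=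
  le_antisymm
    (opNorm_le_bound f (norm_nonneg g) fun x => (h x).le.trans (le_opNorm g x))
    (opNorm_le_bound g (norm_nonneg f) fun x => (h x).ge.trans (le_opNorm f x))

variable (z : H →L[ℂ] H)

/-- The defect operator `(1 - z* z)^{1/2}`. -/
def sq : H →L[ℂ] H := CFC.sqrt (1 - ContinuousLinearMap.adjoint z * z)

/-- The `ℓ²` equivalence. -/
def e : WithLp 2 (H × H) ≃L[ℂ] H × H :=
  WithLp.prodContinuousLinearEquiv (p := 2) (𝕜 := ℂ) (α := H) (β := H)

/-- The row operator `[z*, (1-z*z)^{1/2}]`. -/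
def R : WithLp 2 (H × H) →L[ℂ] H :=
  ((ContinuousLinearMap.adjoint z).coprod (sq z)).comp (e (H := H)).toContinuousLinearMap

/-- The column operator `[z; (1-z*z)^{1/2}]`. -/
def C : H →L[ℂ] WithLp 2 (H × H) :=
  (e (H := H)).symm.toContinuousLinearMap.comp (z.prod (sq z))

/-- The isometric embedding into the first coordinate. -/
def iota : H →L[ℂ] WithLp 2 (H × H) :=
  (e (H := H)).symm.toContinuousLinearMap.comp (ContinuousLinearMap.inl ℂ H H)

lemma R_apply (k : WithLp 2 (H × H)) :
    R z k = ContinuousLinearMap.adjoint z k.fst + sq z k.snd := rfl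

lemma C_apply_fst (h : H) : (C z h).fst = z h := rfl
lemma C_apply_snd (h : H) : (C z h).snd = sq z h := rfl
lemma iota_apply_fst (h : H) : (iota (H := H) h).fst = h := rfl
lemma iota_apply_snd (h : H) : (iota (H := H) h).snd = 0 := rfl

variable {z}

lemma defect_nonneg (hz : ‖z‖ ≤ 1) : (0 : H →L[ℂ] H) ≤ 1 - ContinuousLinearMap.adjoint z * z := by
  have hsa : IsSelfAdjoint (1 - ContinuousLinearMap.adjoint z * z) := by
    have h1 : IsSelfAdjoint (1 : H →L[ℂ] H) := IsSelfAdjoint.one _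
    have h2 : IsSelfAdjoint (ContinuousLinearMap.adjoint z * z) := by
      simpa [ContinuousLinearMap.star_eq_adjoint] using IsSelfAdjoint.star_mul_self z
    exact h1.sub h2
  rw [ContinuousLinearMap.nonneg_iff_isPositive]
  refine ⟨hsa.isSymmetric, fun x => ?_⟩
  rw [ContinuousLinearMap.reApplyInnerSelf_apply]
  have happ : (1 - ContinuousLinearMap.adjoint z * z) x
      = x - ContinuousLinearMap.adjoint z (z x) := by
    simp [ContinuousLinearMap.sub_apply, ContinuousLinearMap.mul_apply]
  rw [happ, inner_sub_left, map_sub]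
  have h1 : RCLike.re (inner (𝕜 := ℂ) x x) = ‖x‖ ^ 2 := by
    rw [← inner_self_eq_norm_sq (𝕜 := ℂ)]
  have h2 : (inner (𝕜 := ℂ) (ContinuousLinearMap.adjoint z (z x)) x) = inner (𝕜 := ℂ) (z x) (z x) :=
    ContinuousLinearMap.adjoint_inner_left z x (z x)
  rw [h2, h1, inner_self_eq_norm_sq (𝕜 := ℂ)]
  have hzx : ‖z x‖ ≤ ‖x‖ := by
    calc ‖z x‖ ≤ ‖z‖ * ‖x‖ := z.le_opNorm x
      _ ≤ 1 * ‖x‖ := by gcongr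
      _ = ‖x‖ := one_mul _
  nlinarith [norm_nonneg (z x), norm_nonneg x]

lemma sq_selfAdjoint : IsSelfAdjoint (sq z) := (CFC.sqrt_nonneg _).isSelfAdjoint

lemma sq_adjoint_eq : ContinuousLinearMap.adjoint (sq z) = sq z := by
  rw [← ContinuousLinearMap.star_eq_adjoint]
  exact (sq_selfAdjoint (z := z)).star_eq

lemma sq_mul_sq (hz : ‖z‖ ≤ 1) :
    sq z * sq z = 1 - ContinuousLinearMap.adjoint z * z :=
  CFC.sqrt_mul_sqrt_self _ (defect_nonneg hz)

lemma sum_eq (hz : ‖z‖ ≤ 1) (h : H) :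
    ContinuousLinearMap.adjoint z (z h) + sq z (sq z h) = h := by
  have : (ContinuousLinearMap.adjoint z * z + sq z * sq z) h = h := by
    rw [sq_mul_sq hz]; simp
  simpa [ContinuousLinearMap.add_apply, ContinuousLinearMap.mul_apply] using this

lemma R_comp_C (hz : ‖z‖ ≤ 1) : (R z).comp (C z) = ContinuousLinearMap.id ℂ H := by
  ext h
  simp only [ContinuousLinearMap.comp_apply, ContinuousLinearMap.id_apply, R_apply,
    C_apply_fst, C_apply_snd]
  exact sum_eq hz h

lemma R_iota (h : H) : R z (iota (H := H) h) = ContinuousLinearMap.adjoint z h := by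
  rw [R_apply, iota_apply_fst, iota_apply_snd, map_zero, add_zero]

lemma norm_iota (h : H) : ‖iota (H := H) h‖ = ‖h‖ := by
  have h2 : ‖iota (H := H) h‖ ^ 2 = ‖h‖ ^ 2 := by
    rw [norm_sq_eq_re_inner (𝕜 := ℂ), norm_sq_eq_re_inner (𝕜 := ℂ) h, WithLp.prod_inner_apply,
      WithLp.ofLp_fst, WithLp.ofLp_snd, iota_apply_fst, iota_apply_snd, inner_zero_left, add_zero]
  nlinarith [norm_nonneg (iota (H := H) h), norm_nonneg h]

lemma norm_C (hz : ‖z‖ ≤ 1) (h : H) : ‖C z h‖ = ‖h‖ := by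
  have h2 : ‖C z h‖ ^ 2 = ‖h‖ ^ 2 := by
    rw [norm_sq_eq_re_inner (𝕜 := ℂ), norm_sq_eq_re_inner (𝕜 := ℂ) h, WithLp.prod_inner_apply,
      WithLp.ofLp_fst, WithLp.ofLp_snd, C_apply_fst, C_apply_snd]
    have e1 : (inner (𝕜 := ℂ) (z h) (z h))
        = inner (𝕜 := ℂ) (ContinuousLinearMap.adjoint z (z h)) h :=
      (ContinuousLinearMap.adjoint_inner_left z h (z h)).symm
    have e2 : (inner (𝕜 := ℂ) (sq z h) (sq z h))
        = inner (𝕜 := ℂ) (sq z (sq z h)) h := by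
      have := ContinuousLinearMap.adjoint_inner_left (sq z) h (sq z h)
      rw [sq_adjoint_eq] at this
      exact this.symm
    rw [e1, e2, ← inner_add_left, sum_eq hz]
  nlinarith [norm_nonneg (C z h), norm_nonneg h]

lemma R_eq_adjoint_C : R z = ContinuousLinearMap.adjoint (C z) := by
  rw [ContinuousLinearMap.eq_adjoint_iff]
  intro k h
  rw [R_apply, inner_add_left, WithLp.prod_inner_apply, WithLp.ofLp_fst, WithLp.ofLp_snd, WithLp.ofLp_fst,
    WithLp.ofLp_snd, C_apply_fst, C_apply_snd]
  congr 1
  · exact ContinuousLinearMap.adjoint_inner_left z h k.fst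
  · have := ContinuousLinearMap.adjoint_inner_left (sq z) h k.snd
    rw [sq_adjoint_eq] at this
    exact this

lemma norm_R_le (hz : ‖z‖ ≤ 1) : ‖R z‖ ≤ 1 := by
  rw [R_eq_adjoint_C]
  have : ‖ContinuousLinearMap.adjoint (C z)‖ = ‖C z‖ := by
    simp [ContinuousLinearMap.adjoint]
  rw [this]
  exact ContinuousLinearMap.opNorm_le_bound _ zero_le_one
    (fun h => by rw [norm_C hz, one_mul])

lemma norm_C_le (hz : ‖z‖ ≤ 1) : ‖C z‖ ≤ 1 :=
  ContinuousLinearMap.opNorm_le_bound _ zero_le_one (fun h => by rw [norm_C hz, one_mul])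

variable (z) in
/-- The map `x ↦ ι ∘ x ∘ R` as a linear map. -/
def PsiLin : (H →L[ℂ] H) →ₗ[ℂ] (WithLp 2 (H × H) →L[ℂ] WithLp 2 (H × H)) where
  toFun x := (iota (H := H)).comp (x.comp (R z))
  map_add' a b := by ext k; simp
  map_smul' c a := by ext k; simp

lemma PsiLin_apply (x : H →L[ℂ] H) (k : WithLp 2 (H × H)) :
    PsiLin z x k = iota (H := H) (x (R z k)) := rfl

lemma norm_PsiLin (hz : ‖z‖ ≤ 1) (x : H →L[ℂ] H) : ‖PsiLin z x‖ = ‖x‖ := by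
  have h1 : ‖PsiLin z x‖ = ‖x.comp (R z)‖ :=
    opNorm_eq_of_ptwise _ _ fun k => norm_iota _
  rw [h1]
  apply le_antisymm
  · calc ‖x.comp (R z)‖ ≤ ‖x‖ * ‖R z‖ := ContinuousLinearMap.opNorm_comp_le _ _
      _ ≤ ‖x‖ * 1 := by gcongr; exact norm_R_le hz
      _ = ‖x‖ := mul_one _
  · have hx : (x.comp (R z)).comp (C z) = x := by
      rw [ContinuousLinearMap.comp_assoc, R_comp_C hz]; rfl
    calc ‖x‖ = ‖(x.comp (R z)).comp (C z)‖ := by rw [hx]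
      _ ≤ ‖x.comp (R z)‖ * ‖C z‖ := ContinuousLinearMap.opNorm_comp_le _ _
      _ ≤ ‖x.comp (R z)‖ * 1 := by gcongr; exact norm_C_le hz
      _ = ‖x.comp (R z)‖ := mul_one _

lemma PsiLin_mul (hz : ‖z‖ ≤ 1) (x y : H →L[ℂ] H) :
    PsiLin z x * PsiLin z y = PsiLin z (x * ContinuousLinearMap.adjoint z * y) := by
  ext k
  rw [ContinuousLinearMap.mul_apply, PsiLin_apply, PsiLin_apply, PsiLin_apply, R_iota]
  simp [ContinuousLinearMap.mul_apply]

end KPaux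

end KPauxSection

/-- Jordan variant of the Kaneda–Paulsen theorem, isometric forward
direction.  For a complex Hilbert space `H` and a contraction `z ∈ B(H)`, there is a
linear isometry `Ψ : B(H) → B(H ⊕₂ H)` with `Ψ x * Ψ y = Ψ (x z* y)`; consequently every
norm-closed subspace `X ⊆ B(H)` with `x z* x ∈ X` for all `x ∈ X` is carried by `Ψ`
isometrically and Jordan-homomorphically (for the product `½(x z* y + y z* x)`) onto the
norm-closed subspace `Ψ '' X`, which is closed under squares, i.e. a Jordan operator
algebra. -/
theorem stmt_0 (H : Type*) [NormedAddCommGroup H] [InnerProductSpace ℂ H] [CompleteSpace H]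
    (z : H →L[ℂ] H) (hz : ‖z‖ ≤ 1) :
    ∃ Ψ : (H →L[ℂ] H) →ₗᵢ[ℂ] (WithLp 2 (H × H) →L[ℂ] WithLp 2 (H × H)),
      (∀ x y : H →L[ℂ] H,
          Ψ x * Ψ y = Ψ (x * ContinuousLinearMap.adjoint z * y)) ∧
      ∀ X : Submodule ℂ (H →L[ℂ] H), IsClosed (X : Set (H →L[ℂ] H)) →
        (∀ x ∈ X, x * ContinuousLinearMap.adjoint z * x ∈ X) →
        IsClosed ((⇑Ψ) '' (X : Set (H →L[ℂ] H))) ∧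
        (∀ w ∈ (⇑Ψ) '' (X : Set (H →L[ℂ] H)), w * w ∈ (⇑Ψ) '' (X : Set (H →L[ℂ] H))) ∧
        (∀ x ∈ X, ∀ y ∈ X,
          Ψ ((2 : ℂ)⁻¹ • (x * ContinuousLinearMap.adjoint z * y
              + y * ContinuousLinearMap.adjoint z * x))
            = (2 : ℂ)⁻¹ • (Ψ x * Ψ y + Ψ y * Ψ x)) := by
  set Ψ : (H →L[ℂ] H) →ₗᵢ[ℂ] (WithLp 2 (H × H) →L[ℂ] WithLp 2 (H × H)) :=
    ⟨KPaux.PsiLin z, KPaux.norm_PsiLin hz⟩ with hΨ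
  have hmul : ∀ x y : H →L[ℂ] H,
      Ψ x * Ψ y = Ψ (x * ContinuousLinearMap.adjoint z * y) :=
    fun x y => KPaux.PsiLin_mul hz x y
  refine ⟨Ψ, hmul, ?_⟩
  intro X hXc hXsq
  refine ⟨?_, ?_, ?_⟩
  · exact ((isComplete_image_iff Ψ.isometry.isUniformInducing).mpr hXc.isComplete).isClosed
  · rintro w ⟨x, hx, rfl⟩
    exact ⟨x * ContinuousLinearMap.adjoint z * x, hXsq x hx, (hmul x x).symm⟩
  · intro x hx y hy
    rw [map_smul, map_add, ← hmul x y, ← hmul y x]
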